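/- If X₁ ≤ … ≤ Xₙ are ordered observations and the plug-in estimator of I₂ from samples of sizes n (from F) and m (from G) with n even is considered, then the estimator can be written as (2/(mn))(R·^{X>} − R·^{X<}) − n/(2m), where R·^{X<} is the sum of overall ranks of the X-observations below the X-median and R·^{X>} that of the X-observations above. -/
import Mathlib


open Finset
open scoped Classical

lemma sum_fin_val_lt {M : Type*} [AddCommMonoid M] (n K : ℕ) (hK : K ≤ n) (g : ℕ → M) :
    ∑ i ∈ univ.filter (fun i : Fin n => i.val < K), g i.val = ∑ j ∈ Finset.range K, g j := by
  classical
  rw [Finset.sum_filter, Fin.sum_univ_eq_sum_range (fun j => if j < K then g j else 0) n,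
    ← Finset.sum_filter]
  congr 1
  ext j
  simp only [Finset.mem_filter, Finset.mem_range]
  omega

lemma card_fin_val_lt (n K : ℕ) (hK : K ≤ n) :
    (univ.filter (fun i : Fin n => i.val < K)).card = K := by
  classical
  rw [Finset.card_filter, Fin.sum_univ_eq_sum_range (fun j => if j < K then 1 else 0) n,
    ← Finset.card_filter]
  rw [show (Finset.range n).filter (fun j => j < K) = Finset.range K by
    ext j; simp only [Finset.mem_filter, Finset.mem_range]; omega]
  exact Finset.card_range K

lemma gauss_real (K : ℕ) : ∑ j ∈ Finset.range K, ((j : ℝ) + 1) = K * (K + 1) / 2 := by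
  induction K with
  | zero => simp
  | succ k ih => rw [Finset.sum_range_succ, ih]; push_cast; ring


/-- For ordered observations X₁ ≤ … ≤ Xₙ (n even) and Y₁, …, Y_m with no ties, the plug-in
estimator Î₂ = 2(∫_{F̂ₙ⁻¹(1/2)}^∞ Ĝ_m dF̂ₙ − ∫_{−∞}^{F̂ₙ⁻¹(1/2)} Ĝ_m dF̂ₙ) can be written as
(2/(mn))(R·^{X>} − R·^{X<}) − n/(2m), where R·^{X<} (resp. R·^{X>}) is the sum of the overall
ranks of the X-observations below (resp. above) the X-median. -/
theorem I2hat_rank_representation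
    (n m : ℕ) (hn : 0 < n) (hm : 0 < m) (hne : Even n)
    (X : Fin n → ℝ) (Y : Fin m → ℝ) (hmono : Monotone X)
    (hXi : Function.Injective X) (hYi : Function.Injective Y)
    (hXY : ∀ i j, X i ≠ Y j)
    (Fhat Ghat : ℝ → ℝ)
    (hF : ∀ x, Fhat x = ((univ.filter (fun i => X i ≤ x)).card : ℝ) / n)
    (hG : ∀ x, Ghat x = ((univ.filter (fun j => Y j ≤ x)).card : ℝ) / m)
    (q : ℝ) (hq : q = sInf {y : ℝ | (1:ℝ)/2 ≤ Fhat y})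
    (I2hat : ℝ)
    (hI2 : I2hat = 2 * ((1/(n:ℝ)) * ∑ i ∈ univ.filter (fun i => q < X i), Ghat (X i)
                      - (1/(n:ℝ)) * ∑ i ∈ univ.filter (fun i => X i ≤ q), Ghat (X i)))
    (rank : ℝ → ℕ)
    (hrank : ∀ v, rank v = (univ.filter (fun i => X i ≤ v)).card
                         + (univ.filter (fun j => Y j ≤ v)).card)
    (Rlt Rgt : ℕ)
    (hRlt : Rlt = ∑ i ∈ univ.filter (fun i => X i ≤ q), rank (X i))
    (hRgt : Rgt = ∑ i ∈ univ.filter (fun i => q < X i), rank (X i)) :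
    I2hat = 2 / ((m:ℝ) * n) * ((Rgt:ℝ) - (Rlt:ℝ)) - (n:ℝ) / (2 * m) := by
  classical
  have hsm : StrictMono X := hmono.strictMono_of_injective hXi
  obtain ⟨K0, hK0⟩ := hne
  set K : ℕ := K0 with hKdef
  have hK2 : n = 2 * K := by omega
  have hKpos : 0 < K := by omega
  have hKn : K ≤ n := by omega
  set k : Fin n := ⟨K - 1, by omega⟩ with hk
  -- q = X k
  have hcount : ∀ y : ℝ, (K ≤ (univ.filter (fun i => X i ≤ y)).card ↔ X k ≤ y) := by
    intro y
    constructor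
    · intro h
      by_contra hy
      push_neg at hy
      have hsub : univ.filter (fun i => X i ≤ y) ⊆ univ.filter (fun i : Fin n => i.val < K - 1) := by
        intro i hi
        simp only [Finset.mem_filter, Finset.mem_univ, true_and] at hi ⊢
        have : X i < X k := lt_of_le_of_lt hi hy
        have hik : i < k := hsm.lt_iff_lt.mp this
        have h2 := Fin.lt_def.mp hik
        have hkv : (k : ℕ) = K - 1 := rfl
        omega
      have := Finset.card_le_card hsub
      rw [card_fin_val_lt n (K - 1) (by omega)] at this
      omega
    · intro h
      have hsub : univ.filter (fun i : Fin n => i.val < K) ⊆ univ.filter (fun i => X i ≤ y) := by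
        intro i hi
        simp only [Finset.mem_filter, Finset.mem_univ, true_and] at hi ⊢
        have hik : i ≤ k := by rw [Fin.le_def]; simp only [hk]; omega
        exact le_trans (hmono hik) h
      have := Finset.card_le_card hsub
      rwa [card_fin_val_lt n K hKn] at this
  have hset : {y : ℝ | (1:ℝ)/2 ≤ Fhat y} = Set.Ici (X k) := by
    ext y
    simp only [Set.mem_setOf_eq, Set.mem_Ici]
    rw [hF y, ← hcount y]
    rw [div_le_div_iff₀ (by norm_num) (by exact_mod_cast hn)]
    constructor
    · intro h
      have : (n : ℝ) ≤ 2 * (univ.filter (fun i => X i ≤ y)).card := by linarith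
      have h2 : n ≤ 2 * (univ.filter (fun i => X i ≤ y)).card := by exact_mod_cast this
      omega
    · intro h
      have : (2 * K : ℝ) ≤ 2 * (univ.filter (fun i => X i ≤ y)).card := by
        exact_mod_cast Nat.mul_le_mul_left 2 h
      rw [show ((n:ℝ)) = 2 * K by exact_mod_cast hK2]
      linarith
  have hqX : q = X k := by rw [hq, hset]; exact csInf_Ici
  -- characterize the lower / upper sets
  have hLset : univ.filter (fun i => X i ≤ q) = univ.filter (fun i : Fin n => i.val < K) := by
    ext i
    simp only [Finset.mem_filter, Finset.mem_univ, true_and, hqX]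
    rw [hsm.le_iff_le, Fin.le_def]
    simp only [hk]
    omega
  have hUset : univ.filter (fun i => q < X i) = univ.filter (fun i : Fin n => ¬ i.val < K) := by
    ext i
    simp only [Finset.mem_filter, Finset.mem_univ, true_and, hqX]
    rw [hsm.lt_iff_lt, Fin.lt_def]
    simp only [hk]
    omega
  -- count of X's below X j
  have hcX : ∀ j : Fin n, (univ.filter (fun i => X i ≤ X j)).card = j.val + 1 := by
    intro j
    have hEq : univ.filter (fun i => X i ≤ X j) = univ.filter (fun i : Fin n => i.val < j.val + 1) := by
      ext i
      simp only [Finset.mem_filter, Finset.mem_univ, true_and]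
      rw [hsm.le_iff_le, Fin.le_def]
      omega
    rw [hEq, card_fin_val_lt n (j.val + 1) (by omega)]
  -- Y-count in terms of Ghat
  have hcY : ∀ v : ℝ, ((univ.filter (fun j => Y j ≤ v)).card : ℝ) = m * Ghat v := by
    intro v
    rw [hG v]
    field_simp
  set Sl : ℝ := ∑ i ∈ univ.filter (fun i : Fin n => i.val < K), Ghat (X i) with hSl
  set Sg : ℝ := ∑ i ∈ univ.filter (fun i : Fin n => ¬ i.val < K), Ghat (X i) with hSg
  -- index sums
  have hsumL : ∑ i ∈ univ.filter (fun i : Fin n => i.val < K), ((i.val : ℝ) + 1)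
      = K * (K + 1) / 2 := by
    rw [sum_fin_val_lt n K hKn (fun j => (j : ℝ) + 1), gauss_real]
  have hsumT : ∑ i ∈ (univ : Finset (Fin n)), ((i.val : ℝ) + 1) = n * (n + 1) / 2 := by
    rw [Fin.sum_univ_eq_sum_range (fun j => (j : ℝ) + 1) n, gauss_real]
  have hsumU : ∑ i ∈ univ.filter (fun i : Fin n => ¬ i.val < K), ((i.val : ℝ) + 1)
      = n * (n + 1) / 2 - K * (K + 1) / 2 := by
    have hsplit := Finset.sum_filter_add_sum_filter_not (univ : Finset (Fin n))
      (fun i : Fin n => i.val < K) (fun i => (i.val : ℝ) + 1)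
    rw [hsumL, hsumT] at hsplit
    linarith
  -- rank sums
  have hRltR : (Rlt : ℝ) = K * (K + 1) / 2 + m * Sl := by
    have h1 : (Rlt : ℝ) = ∑ i ∈ univ.filter (fun i : Fin n => i.val < K),
        (((i.val : ℝ) + 1) + (m : ℝ) * Ghat (X i)) := by
      rw [hRlt, hLset, Nat.cast_sum]
      refine Finset.sum_congr rfl (fun i _ => ?_)
      rw [hrank (X i), hcX i, Nat.cast_add, hcY (X i)]
      push_cast
      ring
    rw [h1, Finset.sum_add_distrib, hsumL, ← Finset.mul_sum, ← hSl]
  have hRgtR : (Rgt : ℝ) = n * (n + 1) / 2 - K * (K + 1) / 2 + m * Sg := by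
    have h1 : (Rgt : ℝ) = ∑ i ∈ univ.filter (fun i : Fin n => ¬ i.val < K),
        (((i.val : ℝ) + 1) + (m : ℝ) * Ghat (X i)) := by
      rw [hRgt, hUset, Nat.cast_sum]
      refine Finset.sum_congr rfl (fun i _ => ?_)
      rw [hrank (X i), hcX i, Nat.cast_add, hcY (X i)]
      push_cast
      ring
    rw [h1, Finset.sum_add_distrib, hsumU, ← Finset.mul_sum, ← hSg]
  -- final computation
  have hnR : (n : ℝ) = 2 * K := by exact_mod_cast hK2
  have hmR : (m : ℝ) ≠ 0 := by exact_mod_cast hm.ne'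
  have hKR : (K : ℝ) ≠ 0 := by exact_mod_cast hKpos.ne'
  rw [hI2, hLset, hUset, ← hSl, ← hSg, hRltR, hRgtR, hnR]
  field_simp
  ring
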